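/- Let X be a real Banach space and let x ∈ S_X be a locally uniformly nonsquare point (i.e., there exists δ > 0 such that min{‖x + y‖, ‖x − y‖} ≤ 2 − δ for all y ∈ S_X). Then there exists ε > 0 such that the weak*-slice S(x, ε) = {x* ∈ B_{X*} : x*(x) > 1 − ε} of the dual unit ball B_{X*} has diameter strictly less than 2. -/

import Mathlib

/-- If `x ∈ S_X` is a locally uniformly nonsquare point of a
real Banach space `X`, then some weak*-slice `S(x, ε)` of the dual unit ball
has diameter strictly less than 2. -/
theorem lunsq_point_small_dual_slice
    {X : Type*} [NormedAddCommGroup X] [NormedSpace ℝ X] [CompleteSpace X]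
    (x : X) (hx : ‖x‖ = 1)
    (hlunsq : ∃ δ > 0, ∀ y : X, ‖y‖ = 1 → min ‖x + y‖ ‖x - y‖ ≤ 2 - δ) :
    ∃ ε > 0,
      Metric.diam {f : StrongDual ℝ X | ‖f‖ ≤ 1 ∧ f x > 1 - ε} < 2 := by
  obtain ⟨δ, hδ, hmin⟩ := hlunsq
  -- δ ≤ 2
  have hδ2 : δ ≤ 2 := by
    have := hmin x hx
    have h0 : ‖x - x‖ = 0 := by simp
    have : min ‖x + x‖ ‖x - x‖ ≤ 2 - δ := this
    rw [h0, min_eq_right (norm_nonneg _)] at this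
    linarith
  refine ⟨δ / 3, by linarith, ?_⟩
  -- key pointwise bound
  have key : ∀ f g : StrongDual ℝ X, ‖f‖ ≤ 1 → ‖g‖ ≤ 1 →
      f x > 1 - δ / 3 → g x > 1 - δ / 3 → ∀ y : X, ‖y‖ = 1 →
      f y - g y ≤ 2 - δ / 3 := by
    intro f g hf hg hfx hgx y hy
    have hfy : f y ≤ 1 := by
      calc f y ≤ ‖f y‖ := le_abs_self _
        _ ≤ ‖f‖ * ‖y‖ := f.le_opNorm y
        _ ≤ 1 := by rw [hy]; simpa using hf
    have hgy : -g y ≤ 1 := by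
      calc -g y ≤ ‖g y‖ := neg_le_abs _
        _ ≤ ‖g‖ * ‖y‖ := g.le_opNorm y
        _ ≤ 1 := by rw [hy]; simpa using hg
    rcases min_le_iff.mp (hmin y hy) with h | h
    · -- ‖x + y‖ ≤ 2 - δ : bound f y
      have hfa : f (x + y) ≤ 2 - δ := by
        calc f (x + y) ≤ ‖f (x + y)‖ := le_abs_self _
          _ ≤ ‖f‖ * ‖x + y‖ := f.le_opNorm _
          _ ≤ 1 * (2 - δ) := by
              apply mul_le_mul hf h (norm_nonneg _) zero_le_one
          _ = 2 - δ := one_mul _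
      have : f y ≤ 2 - δ - f x := by
        have := f.map_add x y
        linarith [this ▸ hfa]
      linarith
    · -- ‖x - y‖ ≤ 2 - δ : bound -g y
      have hga : g (x - y) ≤ 2 - δ := by
        calc g (x - y) ≤ ‖g (x - y)‖ := le_abs_self _
          _ ≤ ‖g‖ * ‖x - y‖ := g.le_opNorm _
          _ ≤ 1 * (2 - δ) := by
              apply mul_le_mul hg h (norm_nonneg _) zero_le_one
          _ = 2 - δ := one_mul _
      have hmap : g (x - y) = g x - g y := by simp
      rw [hmap] at hga
      linarith
  have hdiam : Metric.diam {f : StrongDual ℝ X | ‖f‖ ≤ 1 ∧ f x > 1 - δ / 3}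
      ≤ 2 - δ / 3 := by
    apply Metric.diam_le_of_forall_dist_le (by linarith)
    rintro f ⟨hf, hfx⟩ g ⟨hg, hgx⟩
    rw [dist_eq_norm]
    apply ContinuousLinearMap.opNorm_le_of_unit_norm (by linarith)
    intro y hy
    have h1 := key f g hf hg hfx hgx y hy
    have h2 := key g f hg hf hgx hfx y hy
    have : (f - g) y = f y - g y := rfl
    rw [this, Real.norm_eq_abs, abs_le]
    constructor <;> linarith
  linarith
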